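/- Let X be a locally Lindelöf, c-well-filtered P-space. Then the map φ'(U) = {K ∈ LQ(X) : K ⊆ U} is an order isomorphism from the lattice O(X) of open sets of X (ordered by ⊆) onto the set of all σ-Scott open countable filters of the poset (LQ(X), ⊇), ordered by ⊆. -/
import Mathlib


universe u

/-- A set is saturated if it equals the intersection of its open neighbourhoods. -/
def IsSaturatedSet {X : Type u} [TopologicalSpace X] (A : Set X) : Prop :=
  A = ⋂₀ {U : Set X | IsOpen U ∧ A ⊆ U}

/-- A family of sets is countably filtered (under `⊆`) if every countable subfamily
has a lower bound in the family. -/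
def CntFilteredFam {X : Type u} (S : Set (Set X)) : Prop :=
  ∀ T ⊆ S, T.Countable → ∃ L ∈ S, ∀ t ∈ T, L ⊆ t

/-- A family of sets is countably directed (under `⊆`) if every countable subfamily
has an upper bound in the family. -/
def CntDirectedFam {X : Type u} (S : Set (Set X)) : Prop :=
  ∀ T ⊆ S, T.Countable → ∃ U ∈ S, ∀ t ∈ T, t ⊆ U

/-- A space is c-well-filtered if for every countably filtered family of saturated
Lindelöf subsets whose intersection is contained in an open `U`, some member is contained in `U`. -/
def CWellFiltered (X : Type u) [TopologicalSpace X] : Prop :=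
  ∀ S : Set (Set X), (∀ K ∈ S, IsSaturatedSet K ∧ IsLindelof K) →
    CntFilteredFam S → ∀ U : Set X, IsOpen U → ⋂₀ S ⊆ U → ∃ K ∈ S, K ⊆ U

/-- A subset `D` is countably directed w.r.t. `le` if every countable subset of `D`
has an upper bound in `D`. -/
def CntDirected {α : Type u} (le : α → α → Prop) (D : Set α) : Prop :=
  ∀ E ⊆ D, E.Countable → ∃ d ∈ D, ∀ e ∈ E, le e d

/-- `a` is a least upper bound of `D` w.r.t. `le`. -/
def RIsLUB {α : Type u} (le : α → α → Prop) (D : Set α) (a : α) : Prop :=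
  (∀ d ∈ D, le d a) ∧ ∀ b, (∀ d ∈ D, le d b) → le a b

/-- Countably directed complete: every countably directed subset has a least upper bound. -/
def CDComplete {α : Type u} (le : α → α → Prop) : Prop :=
  ∀ D : Set α, CntDirected le D → ∃ a, RIsLUB le D a

/-- `x` is countably way-below `y`. -/
def CWayBelow {α : Type u} (le : α → α → Prop) (x y : α) : Prop :=
  ∀ D : Set α, CntDirected le D → ∀ a, RIsLUB le D a → le y a → ∃ d ∈ D, le x d

/-- `U` is σ-Scott open: an upper set meeting every countably directed set whose sup lies in `U`. -/
def SigmaScottOpenRel {α : Type u} (le : α → α → Prop) (U : Set α) : Prop :=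
  (∀ x ∈ U, ∀ y, le x y → y ∈ U) ∧
  ∀ D : Set α, CntDirected le D → ∀ a, RIsLUB le D a → a ∈ U → ∃ d ∈ D, d ∈ U

/-- `F` is countably filtered w.r.t. `le`: every countable subset has a lower bound in `F`. -/
def CntFilteredRel {α : Type u} (le : α → α → Prop) (F : Set α) : Prop :=
  ∀ E ⊆ F, E.Countable → ∃ l ∈ F, ∀ e ∈ E, le l e

/-- Countably approximating: countably directed complete and each `x` is the sup of
the countably directed set of elements countably way-below `x`. -/
def CntApprox {α : Type u} (le : α → α → Prop) : Prop :=
  CDComplete le ∧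
    ∀ x, CntDirected le {y | CWayBelow le y x} ∧ RIsLUB le {y | CWayBelow le y x} x

/-- `B` is a σ-basis: for each `x`, `B ∩ ⇓꜀x` is countably directed with sup `x`. -/
def IsSigmaBasis {α : Type u} (le : α → α → Prop) (B : Set α) : Prop :=
  ∀ x, CntDirected le (B ∩ {y | CWayBelow le y x}) ∧
    RIsLUB le (B ∩ {y | CWayBelow le y x}) x

/-- A P-space: every countable intersection of open sets is open. -/
def PSpace (X : Type u) [TopologicalSpace X] : Prop :=
  ∀ 𝒰 : Set (Set X), 𝒰.Countable → (∀ U ∈ 𝒰, IsOpen U) → IsOpen (⋂₀ 𝒰)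

/-- Locally Lindelöf: every open neighbourhood contains a saturated Lindelöf
neighbourhood. -/
def LocallyLindelofSp (X : Type u) [TopologicalSpace X] : Prop :=
  ∀ U : Set X, IsOpen U → ∀ x ∈ U, ∃ K : Set X,
    IsSaturatedSet K ∧ IsLindelof K ∧ x ∈ interior K ∧ K ⊆ U

/-- The saturated Lindelöf subsets of `X`. -/
def LQ (X : Type u) [TopologicalSpace X] : Type u :=
  {K : Set X // IsSaturatedSet K ∧ IsLindelof K}

/-- The order of `(LQ(X), ⊇)`: reverse inclusion. -/
def lqLe {X : Type u} [TopologicalSpace X] (A B : LQ X) : Prop := B.1 ⊆ A.1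

/-- `φ'(U) = {K ∈ LQ(X) : K ⊆ U}`. -/
def phi' {X : Type u} [TopologicalSpace X] (U : Set X) : Set (LQ X) := {K | K.1 ⊆ U}

/-- A σ-Scott open countable filter of `(LQ(X), ⊇)`. -/
def OCFiltSigma {X : Type u} [TopologicalSpace X] (F : Set (LQ X)) : Prop :=
  SigmaScottOpenRel (lqLe (X := X)) F ∧ CntFilteredRel (lqLe (X := X)) F

section Aux

variable {X : Type u} [TopologicalSpace X]

/-- The saturation of a set. -/
def satOf (S : Set X) : Set X := ⋂₀ {U : Set X | IsOpen U ∧ S ⊆ U}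

lemma subset_satOf {S : Set X} : S ⊆ satOf S := by
  intro x hx U hU
  exact hU.2 hx

lemma satOf_subset {S U : Set X} (hU : IsOpen U) (h : S ⊆ U) : satOf S ⊆ U :=
  Set.sInter_subset_of_mem ⟨hU, h⟩

lemma satOf_saturated (S : Set X) : IsSaturatedSet (satOf S) := by
  apply Set.Subset.antisymm
  · intro x hx
    rintro U ⟨h1, h2⟩
    exact hx U ⟨h1, subset_satOf.trans h2⟩
  · intro x hx
    rintro U ⟨h1, h2⟩
    exact hx U ⟨h1, satOf_subset h1 h2⟩

lemma satOf_lindelof {S : Set X} (h : IsLindelof S) : IsLindelof (satOf S) := by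
  apply isLindelof_of_countable_subcover
  intro ι U hUo hsU
  obtain ⟨r, hr, hcov⟩ := h.elim_countable_subcover U hUo (subset_satOf.trans hsU)
  exact ⟨r, hr, satOf_subset (isOpen_biUnion fun i _ => hUo i) hcov⟩

/-- Shrink lemma: in a locally Lindelöf space, every Lindelöf set inside an open `V`
has a saturated Lindelöf "interpolant". -/
lemma shrink_lemma (hLL : LocallyLindelofSp X) {K V : Set X} (hK : IsLindelof K)
    (hV : IsOpen V) (hKV : K ⊆ V) :
    ∃ L : Set X, IsSaturatedSet L ∧ IsLindelof L ∧ K ⊆ interior L ∧ L ⊆ V := by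
  have h : ∀ x : K, ∃ Kx : Set X,
      IsSaturatedSet Kx ∧ IsLindelof Kx ∧ (x : X) ∈ interior Kx ∧ Kx ⊆ V :=
    fun x => hLL V hV x (hKV x.2)
  choose Kx h1 h2 h3 h4 using h
  have hcov : K ⊆ ⋃ x : K, interior (Kx x) := fun y hy =>
    Set.mem_iUnion.2 ⟨⟨y, hy⟩, h3 ⟨y, hy⟩⟩
  obtain ⟨r, hr, hrcov⟩ := hK.elim_countable_subcover (fun x : K => interior (Kx x))
    (fun _ => isOpen_interior) hcov
  refine ⟨satOf (⋃ x ∈ r, Kx x), satOf_saturated _, satOf_lindelof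
    (hr.isLindelof_biUnion fun x _ => h2 x), ?_, ?_⟩
  · have h5 : (⋃ x ∈ r, interior (Kx x)) ⊆ interior (satOf (⋃ x ∈ r, Kx x)) := by
      apply interior_maximal _ (isOpen_biUnion fun i _ => isOpen_interior)
      exact Set.iUnion₂_mono (fun x _ => interior_subset) |>.trans subset_satOf
    exact hrcov.trans h5
  · exact satOf_subset hV (Set.iUnion₂_subset fun x _ => h4 x)

lemma img_filtered {D : Set (LQ X)} (hD : CntDirected (lqLe (X := X)) D) :
    CntFilteredFam (Subtype.val '' D) := by
  intro T hT hTc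
  have hch : ∀ t : T, ∃ d : LQ X, d ∈ D ∧ d.1 = (t : Set X) := by
    intro t
    obtain ⟨d, hd, hdt⟩ := hT t.2
    exact ⟨d, hd, hdt⟩
  choose f hf1 hf2 using hch
  have : Countable T := hTc.to_subtype
  obtain ⟨d, hdD, hub⟩ := hD (Set.range f) (Set.range_subset_iff.2 hf1)
    (Set.countable_range f)
  refine ⟨d.1, ⟨d, hdD, rfl⟩, fun t ht => ?_⟩
  have h := hub (f ⟨t, ht⟩) ⟨⟨t, ht⟩, rfl⟩
  have h2 : (f ⟨t, ht⟩).1 = t := hf2 ⟨t, ht⟩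
  show d.1 ⊆ t
  rw [← h2]
  exact h

lemma lq_props {D : Set (LQ X)} :
    ∀ K ∈ Subtype.val '' D, IsSaturatedSet K ∧ IsLindelof K := by
  rintro K ⟨d, _, rfl⟩
  exact d.2

lemma inter_lindelof (hW : CWellFiltered X) {D : Set (LQ X)}
    (hD : CntDirected (lqLe (X := X)) D) : IsLindelof (⋂₀ (Subtype.val '' D)) := by
  apply isLindelof_of_countable_subcover
  intro ι U hUo hsU
  obtain ⟨K, hKS, hKU⟩ := hW (Subtype.val '' D) lq_props (img_filtered hD)
    (⋃ i, U i) (isOpen_iUnion hUo) hsU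
  obtain ⟨d, hdD, rfl⟩ := hKS
  obtain ⟨r, hr, hcov⟩ := d.2.2.elim_countable_subcover U hUo hKU
  exact ⟨r, hr, (Set.sInter_subset_of_mem (Set.mem_image_of_mem _ hdD)).trans hcov⟩

lemma inter_saturated {D : Set (LQ X)} (_hne : D.Nonempty) :
    IsSaturatedSet (⋂₀ (Subtype.val '' D)) := by
  apply Set.Subset.antisymm
  · intro x hx U hU
    exact hU.2 hx
  · intro x hx
    rintro K ⟨d, hdD, rfl⟩
    rw [d.2.1]
    intro V hV
    exact hx V ⟨hV.1, (Set.sInter_subset_of_mem (Set.mem_image_of_mem _ hdD)).trans hV.2⟩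

lemma lub_eq_sInter (hW : CWellFiltered X) {D : Set (LQ X)}
    (hD : CntDirected (lqLe (X := X)) D) {a : LQ X}
    (ha : RIsLUB (lqLe (X := X)) D a) : a.1 = ⋂₀ (Subtype.val '' D) := by
  obtain ⟨d₀, hd₀, -⟩ := hD ∅ (Set.empty_subset _) Set.countable_empty
  have hb : IsSaturatedSet (⋂₀ (Subtype.val '' D)) ∧
      IsLindelof (⋂₀ (Subtype.val '' D)) :=
    ⟨inter_saturated ⟨d₀, hd₀⟩, inter_lindelof hW hD⟩
  set b : LQ X := ⟨⋂₀ (Subtype.val '' D), hb⟩ with hbdef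
  apply Set.Subset.antisymm
  · exact Set.subset_sInter (by rintro K ⟨d, hdD, rfl⟩; exact ha.1 d hdD)
  · exact ha.2 b fun d hdD => Set.sInter_subset_of_mem (Set.mem_image_of_mem _ hdD)

end Aux

/-- Hofmann–Mislove for c-well-filtered spaces: for a locally Lindelöf,
c-well-filtered P-space, `φ'` is an order isomorphism from `O(X)` onto the σ-Scott open
countable filters of `(LQ(X), ⊇)`. -/
theorem stmt19 {X : Type u} [TopologicalSpace X] (hLL : LocallyLindelofSp X)
    (hW : CWellFiltered X) (hP : PSpace X) :
    (∀ U : Set X, IsOpen U → OCFiltSigma (phi' U)) ∧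
    (∀ F : Set (LQ X), OCFiltSigma F → ∃ U : Set X, IsOpen U ∧ phi' U = F) ∧
    (∀ U V : Set X, IsOpen U → IsOpen V → (U ⊆ V ↔ phi' U ⊆ phi' V)) := by
  refine ⟨?_, ?_, ?_⟩
  · -- φ'(U) is a σ-Scott open countable filter
    intro U hU
    refine ⟨⟨fun K hK L hle => hle.trans hK, ?_⟩, ?_⟩
    · -- σ-Scott openness
      intro D hD a ha haU
      have hIa : a.1 = ⋂₀ (Subtype.val '' D) := lub_eq_sInter hW hD ha
      obtain ⟨K, hKS, hKU⟩ := hW (Subtype.val '' D) lq_props (img_filtered hD)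
        U hU (by rw [← hIa]; exact haU)
      obtain ⟨d, hdD, rfl⟩ := hKS
      exact ⟨d, hdD, hKU⟩
    · -- countably filtered
      intro E hE hEc
      have hlin : IsLindelof (⋃ e ∈ E, (e : LQ X).1) :=
        hEc.isLindelof_biUnion fun e _ => e.2.2
      have hsub : (⋃ e ∈ E, (e : LQ X).1) ⊆ U :=
        Set.iUnion₂_subset fun e he => hE he
      refine ⟨⟨satOf (⋃ e ∈ E, (e : LQ X).1), satOf_saturated _, satOf_lindelof hlin⟩,
        satOf_subset hU hsub, fun e he => ?_⟩
      exact (Set.subset_biUnion_of_mem he).trans subset_satOf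
  · -- surjectivity
    rintro F ⟨hscott, hfilt⟩
    refine ⟨⋃ L ∈ F, interior (L : LQ X).1,
      isOpen_biUnion fun _ _ => isOpen_interior, ?_⟩
    ext K
    constructor
    · -- φ'(U) ⊆ F
      intro hKU
      have hcov : K.1 ⊆ ⋃ i : F, interior ((i : LQ X)).1 := by
        intro x hx
        obtain ⟨L, hLF, hxL⟩ := by
          simpa using hKU hx
        exact Set.mem_iUnion.2 ⟨⟨L, hLF⟩, hxL⟩
      obtain ⟨r, hr, hrcov⟩ := K.2.2.elim_countable_subcover
        (fun i : F => interior ((i : LQ X)).1) (fun _ => isOpen_interior) hcov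
      obtain ⟨M, hMF, hM⟩ := hfilt (Subtype.val '' r)
        (by rintro e ⟨i, _, rfl⟩; exact i.2) (hr.image _)
      have hKM : K.1 ⊆ M.1 := by
        refine hrcov.trans (Set.iUnion₂_subset fun i hi => ?_)
        exact interior_subset.trans (hM i.1 (Set.mem_image_of_mem _ hi))
      exact hscott.1 M hMF K hKM
    · -- F ⊆ φ'(U)
      intro hKF
      set D : Set (LQ X) := {L : LQ X | K.1 ⊆ interior L.1} with hDdef
      have hDdir : CntDirected (lqLe (X := X)) D := by
        intro E hE hEc
        have hVo : IsOpen (⋂₀ ((fun L : LQ X => interior L.1) '' E)) :=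
          hP _ (hEc.image _) (by rintro W ⟨e, _, rfl⟩; exact isOpen_interior)
        have hKV : K.1 ⊆ ⋂₀ ((fun L : LQ X => interior L.1) '' E) :=
          Set.subset_sInter (by rintro W ⟨e, he, rfl⟩; exact hE he)
        obtain ⟨L, hsat, hlin, hKint, hLV⟩ := shrink_lemma hLL K.2.2 hVo hKV
        refine ⟨⟨L, hsat, hlin⟩, hKint, fun e he => ?_⟩
        exact (hLV.trans (Set.sInter_subset_of_mem (Set.mem_image_of_mem _ he))).trans
          interior_subset
      have hlub : RIsLUB (lqLe (X := X)) D K := by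
        constructor
        · intro L hL
          exact hL.trans interior_subset
        · intro b hb
          show b.1 ⊆ K.1
          rw [K.2.1]
          refine Set.subset_sInter ?_
          rintro V ⟨hVo, hKV⟩
          obtain ⟨L, hsat, hlin, hKint, hLV⟩ := shrink_lemma hLL K.2.2 hVo hKV
          exact (hb ⟨L, hsat, hlin⟩ hKint).trans hLV
      obtain ⟨d, hdD, hdF⟩ := hscott.2 D hDdir K hlub hKF
      exact hdD.trans (Set.subset_biUnion_of_mem hdF)
  · -- order embedding
    intro U V hU hV
    constructor
    · intro h K hK
      exact Set.Subset.trans hK h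
    · intro h x hx
      obtain ⟨K, hsat, hlin, hxint, hKU⟩ := hLL U hU x hx
      have hKF : (⟨K, hsat, hlin⟩ : LQ X) ∈ phi' U := hKU
      exact h hKF (interior_subset hxint)
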